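/- arXiv:2105.09168 — 2 statements merged into one kernel-verified Lean document; each statement's English description precedes it below -/
import Mathlib

section
/- Let F be a linear and increasing functional on the class of lower semi-continuous convex functions φ : ℝⁿ → (-∞,∞] that are finite in a neighborhood of 0. Then there exists a constant c ≥ 0 such that F(φ) = c·φ(0) for all such φ. -/
open Filter Topology Metric

/-- `φ : ℝⁿ → (-∞,∞]` is a proper lower semi-continuous convex function. -/
def IsLscConvexFn {n : ℕ} (φ : EuclideanSpace ℝ (Fin n) → EReal) : Prop :=
  LowerSemicontinuous φ ∧ (∀ x, φ x ≠ ⊥) ∧ (∃ x, φ x ≠ ⊤) ∧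
    ∀ x y : EuclideanSpace ℝ (Fin n), ∀ a b : ℝ, 0 < a → 0 < b → a + b = 1 →
      φ (a • x + b • y) ≤ (a : EReal) * φ x + (b : EReal) * φ y

/-- Member of `Cvx~_n`: lsc convex and finite in a neighborhood of the origin. -/
def IsCvxTilde {n : ℕ} (φ : EuclideanSpace ℝ (Fin n) → EReal) : Prop :=
  IsLscConvexFn φ ∧ ∃ r : ℝ, 0 < r ∧ ∀ x ∈ ball (0 : EuclideanSpace ℝ (Fin n)) r, φ x ≠ ⊤

noncomputable def Ind (n : ℕ) (r : ℝ) : EuclideanSpace ℝ (Fin n) → EReal :=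
  fun x => if dist x (0 : EuclideanSpace ℝ (Fin n)) ≤ r then 0 else ⊤

lemma ind_ne_bot {n : ℕ} {r : ℝ} (x : EuclideanSpace ℝ (Fin n)) : Ind n r x ≠ ⊥ := by
  unfold Ind; split <;> simp

lemma ind_of_mem {n : ℕ} {r : ℝ} {x : EuclideanSpace ℝ (Fin n)}
    (h : x ∈ closedBall (0 : EuclideanSpace ℝ (Fin n)) r) : Ind n r x = 0 := by
  rw [mem_closedBall] at h; unfold Ind; rw [if_pos h]

lemma ind_of_not_mem {n : ℕ} {r : ℝ} {x : EuclideanSpace ℝ (Fin n)}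
    (h : x ∉ closedBall (0 : EuclideanSpace ℝ (Fin n)) r) : Ind n r x = ⊤ := by
  rw [mem_closedBall] at h; unfold Ind; rw [if_neg h]

lemma ind_lsc {n : ℕ} {r : ℝ} : LowerSemicontinuous (Ind n r) := by
  intro x y hy
  by_cases hx : x ∈ closedBall (0 : EuclideanSpace ℝ (Fin n)) r
  · rw [ind_of_mem hx] at hy
    refine Eventually.of_forall fun z => lt_of_lt_of_le hy ?_
    unfold Ind; split <;> simp
  · have hop : IsOpen ((closedBall (0 : EuclideanSpace ℝ (Fin n)) r)ᶜ) :=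
      isClosed_closedBall.isOpen_compl
    filter_upwards [hop.mem_nhds hx] with z hz
    rw [ind_of_not_mem hz]
    rw [ind_of_not_mem hx] at hy
    exact hy


lemma coe_mul_ne_bot {b : ℝ} (hb : 0 < b) {w : EReal} (hw : w ≠ ⊥) : (b : EReal) * w ≠ ⊥ := by
  induction w using EReal.rec with
  | bot => exact absurd rfl hw
  | coe t => rw [← EReal.coe_mul]; exact EReal.coe_ne_bot _
  | top => rw [EReal.coe_mul_top_of_pos hb]; simp

lemma isCvxTilde_ind {n : ℕ} {r : ℝ} (hr : 0 < r) : IsCvxTilde (Ind n r) := by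
  refine ⟨⟨ind_lsc, ind_ne_bot, ⟨0, ?_⟩, ?_⟩, r, hr, fun x hx => ?_⟩
  · rw [ind_of_mem (mem_closedBall_self hr.le)]; simp
  · intro x y a b ha hb hab
    by_cases hx : x ∈ closedBall (0 : EuclideanSpace ℝ (Fin n)) r
    · by_cases hy : y ∈ closedBall (0 : EuclideanSpace ℝ (Fin n)) r
      · have hmem : a • x + b • y ∈ closedBall (0 : EuclideanSpace ℝ (Fin n)) r :=
          (convex_closedBall _ _) hx hy ha.le hb.le hab
        rw [ind_of_mem hmem, ind_of_mem hx, ind_of_mem hy]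
        simp
      · rw [ind_of_not_mem hy, EReal.coe_mul_top_of_pos hb]
        rw [EReal.add_top_of_ne_bot]
        · exact le_top
        · exact coe_mul_ne_bot ha (ind_ne_bot x)
    · rw [ind_of_not_mem hx, EReal.coe_mul_top_of_pos ha]
      rw [EReal.top_add_of_ne_bot]
      · exact le_top
      · exact coe_mul_ne_bot hb (ind_ne_bot y)
  · rw [ind_of_mem (ball_subset_closedBall hx)]; simp

lemma isCvxTilde_const {n : ℕ} (m : ℝ) :
    IsCvxTilde (fun _ : EuclideanSpace ℝ (Fin n) => (m : EReal)) := by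
  refine ⟨⟨continuous_const.lowerSemicontinuous, fun _ => EReal.coe_ne_bot _,
    ⟨0, EReal.coe_ne_top _⟩, ?_⟩, 1, one_pos, fun x _ => EReal.coe_ne_top _⟩
  intro x y a b ha hb hab
  rw [← EReal.coe_mul, ← EReal.coe_mul, ← EReal.coe_add]
  rw [EReal.coe_le_coe_iff]
  have : a * m + b * m = m := by rw [← add_mul, hab, one_mul]
  linarith

lemma isCvxTilde_add_ind {n : ℕ} {φ : EuclideanSpace ℝ (Fin n) → EReal} {r : ℝ}
    (hφ : IsCvxTilde φ) (hr : 0 < r) : IsCvxTilde (fun x => φ x + Ind n r x) := by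
  obtain ⟨⟨hlsc, hbot, _, hconv⟩, rφ, hrφ, hfin⟩ := hφ
  refine ⟨⟨?_, ?_, ⟨0, ?_⟩, ?_⟩, min r rφ, lt_min hr hrφ, fun x hx => ?_⟩
  · exact hlsc.add' ind_lsc fun x =>
      EReal.continuousAt_add (Or.inr (ind_ne_bot x)) (Or.inl (hbot x))
  · intro x h
    rcases EReal.add_eq_bot_iff.mp h with h | h
    · exact hbot x h
    · exact ind_ne_bot x h
  · show φ 0 + Ind n r 0 ≠ ⊤
    rw [ind_of_mem (mem_closedBall_self hr.le), add_zero]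
    exact hfin 0 (mem_ball_self hrφ)
  · intro x y a b ha hb hab
    show φ _ + Ind n r _ ≤ (a : EReal) * (φ x + Ind n r x) + (b : EReal) * (φ y + Ind n r y)
    by_cases hx : x ∈ closedBall (0 : EuclideanSpace ℝ (Fin n)) r
    · by_cases hy : y ∈ closedBall (0 : EuclideanSpace ℝ (Fin n)) r
      · have hmem : a • x + b • y ∈ closedBall (0 : EuclideanSpace ℝ (Fin n)) r :=
          (convex_closedBall _ _) hx hy ha.le hb.le hab
        rw [ind_of_mem hmem, ind_of_mem hx, ind_of_mem hy, add_zero, add_zero, add_zero]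
        exact hconv x y a b ha hb hab
      · rw [ind_of_not_mem hy, EReal.add_top_of_ne_bot (hbot y),
          EReal.coe_mul_top_of_pos hb, EReal.add_top_of_ne_bot]
        · exact le_top
        · exact coe_mul_ne_bot ha fun h =>
            (EReal.add_eq_bot_iff.mp h).elim (hbot x) (ind_ne_bot x)
    · rw [ind_of_not_mem hx, EReal.add_top_of_ne_bot (hbot x),
        EReal.coe_mul_top_of_pos ha, EReal.top_add_of_ne_bot]
      · exact le_top
      · exact coe_mul_ne_bot hb fun h =>
          (EReal.add_eq_bot_iff.mp h).elim (hbot y) (ind_ne_bot y)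
  · have h1 : φ x ≠ ⊤ := hfin x (ball_subset_ball (min_le_right r rφ) hx)
    have h2 : Ind n r x = 0 :=
      ind_of_mem (ball_subset_closedBall (ball_subset_ball (min_le_left r rφ) hx))
    show φ x + Ind n r x ≠ ⊤
    rw [h2, add_zero]
    exact h1

lemma cvx_near_zero {n : ℕ} {φ : EuclideanSpace ℝ (Fin n) → EReal} (hφ : IsCvxTilde φ)
    {ε : ℝ} (hε : 0 < ε) :
    ∃ δ : ℝ, 0 < δ ∧ ∀ x ∈ closedBall (0 : EuclideanSpace ℝ (Fin n)) δ,
      φ x ≤ (((φ 0).toReal + ε : ℝ) : EReal) ∧ (((φ 0).toReal - ε : ℝ) : EReal) ≤ φ x := by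
  obtain ⟨⟨hlsc, hbot, _, hconv⟩, r, hr, hfin⟩ := hφ
  have hrepr : ∀ x ∈ ball (0 : EuclideanSpace ℝ (Fin n)) r, φ x = (((φ x).toReal : ℝ) : EReal) :=
    fun x hx => (EReal.coe_toReal (hfin x hx) (hbot x)).symm
  set g : EuclideanSpace ℝ (Fin n) → ℝ := fun x => (φ x).toReal with hg
  have hgconv : ConvexOn ℝ (ball (0 : EuclideanSpace ℝ (Fin n)) r) g := by
    refine ⟨convex_ball _ _, ?_⟩
    intro x hx y hy a b ha hb hab
    have hmem : a • x + b • y ∈ ball (0 : EuclideanSpace ℝ (Fin n)) r :=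
      (convex_ball _ _) hx hy ha hb hab
    rcases ha.eq_or_lt with h0 | ha'
    · have hb1 : b = 1 := by linarith
      have hxy : a • x + b • y = y := by rw [← h0, hb1, zero_smul, zero_add, one_smul]
      rw [hxy, ← h0, hb1]; simp
    rcases hb.eq_or_lt with h0 | hb'
    · have ha1 : a = 1 := by linarith
      have hxy : a • x + b • y = x := by rw [← h0, ha1, zero_smul, add_zero, one_smul]
      rw [hxy, ← h0, ha1]; simp
    have h := hconv x y a b ha' hb' hab
    rw [hrepr _ hx, hrepr _ hy, hrepr _ hmem, ← EReal.coe_mul, ← EReal.coe_mul,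
      ← EReal.coe_add, EReal.coe_le_coe_iff] at h
    exact h
  have hcont : ContinuousAt g 0 :=
    (hgconv.continuousOn isOpen_ball).continuousAt (isOpen_ball.mem_nhds (mem_ball_self hr))
  have h1 : ∀ᶠ x in 𝓝 (0 : EuclideanSpace ℝ (Fin n)), dist (g x) (g 0) < ε :=
    hcont (Metric.ball_mem_nhds _ hε)
  have h2 : ∀ᶠ x in 𝓝 (0 : EuclideanSpace ℝ (Fin n)), x ∈ ball (0 : EuclideanSpace ℝ (Fin n)) r :=
    eventually_of_mem (isOpen_ball.mem_nhds (mem_ball_self hr)) fun x hx => hx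
  obtain ⟨δ', hδ', hball⟩ := Metric.eventually_nhds_iff_ball.mp (h1.and h2)
  refine ⟨δ' / 2, half_pos hδ', fun x hx => ?_⟩
  have hx' : x ∈ ball (0 : EuclideanSpace ℝ (Fin n)) δ' :=
    lt_of_le_of_lt (mem_closedBall.mp hx) (half_lt_self hδ')
  obtain ⟨habs, hmem⟩ := hball x hx'
  rw [Real.dist_eq, abs_lt] at habs
  constructor
  · rw [hrepr x hmem, EReal.coe_le_coe_iff]
    have : g 0 = (φ 0).toReal := rfl
    linarith [habs.2]
  · rw [hrepr x hmem, EReal.coe_le_coe_iff]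
    have : g 0 = (φ 0).toReal := rfl
    linarith [habs.1]


/-- Theorem 4*: a linear and increasing functional on `Cvx~_n` is `c·φ(0)`. -/
theorem riesz_cvx_tilde {n : ℕ} (F : (EuclideanSpace ℝ (Fin n) → EReal) → ℝ)
    (hlin : ∀ φ ψ : EuclideanSpace ℝ (Fin n) → EReal, ∀ α β : ℝ,
      IsCvxTilde φ → IsCvxTilde ψ → 0 < α → 0 < β →
      IsCvxTilde (fun x => (α : EReal) * φ x + (β : EReal) * ψ x) →
      F (fun x => (α : EReal) * φ x + (β : EReal) * ψ x) = α * F φ + β * F ψ)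
    (hmono : ∀ φ ψ : EuclideanSpace ℝ (Fin n) → EReal,
      IsCvxTilde φ → IsCvxTilde ψ → (∀ x, φ x ≤ ψ x) → F φ ≤ F ψ) :
    ∃ c : ℝ, 0 ≤ c ∧ ∀ φ : EuclideanSpace ℝ (Fin n) → EReal,
      IsCvxTilde φ → F φ = c * (φ 0).toReal := by
  set c := F (fun _ : EuclideanSpace ℝ (Fin n) => ((1 : ℝ) : EReal)) with hc
  have step1 : ∀ a b : ℝ, 0 < a → 0 < b → ∀ u v : ℝ,
      F (fun _ : EuclideanSpace ℝ (Fin n) => ((a * u + b * v : ℝ) : EReal)) =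
        a * F (fun _ : EuclideanSpace ℝ (Fin n) => ((u : ℝ) : EReal)) +
        b * F (fun _ : EuclideanSpace ℝ (Fin n) => ((v : ℝ) : EReal)) := by
    intro a b ha hb u v
    have e : (fun _ : EuclideanSpace ℝ (Fin n) =>
        (a : EReal) * ((u : ℝ) : EReal) + (b : EReal) * ((v : ℝ) : EReal))
        = fun _ : EuclideanSpace ℝ (Fin n) => ((a * u + b * v : ℝ) : EReal) := by
      funext x; rw [← EReal.coe_mul, ← EReal.coe_mul, ← EReal.coe_add]
    have h := hlin _ _ a b (isCvxTilde_const u) (isCvxTilde_const v) ha hb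
      (by rw [e]; exact isCvxTilde_const _)
    rw [e] at h
    exact h
  have hF0 : F (fun _ : EuclideanSpace ℝ (Fin n) => ((0 : ℝ) : EReal)) = 0 := by
    have h := step1 1 1 one_pos one_pos 0 0
    rw [show ((1 : ℝ) * 0 + (1 : ℝ) * 0 : ℝ) = 0 by norm_num] at h
    linarith
  have hcneg : F (fun _ : EuclideanSpace ℝ (Fin n) => ((-1 : ℝ) : EReal)) = -c := by
    have h := step1 1 1 one_pos one_pos 1 (-1)
    rw [show ((1 : ℝ) * 1 + (1 : ℝ) * (-1) : ℝ) = 0 by norm_num] at h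
    rw [hF0] at h
    rw [← hc] at h
    linarith
  have hconstm : ∀ m : ℝ, F (fun _ : EuclideanSpace ℝ (Fin n) => ((m : ℝ) : EReal)) = c * m := by
    intro m
    rcases lt_trichotomy m 0 with hm | hm | hm
    · have h := step1 (-m) 1 (by linarith) one_pos (-1) 0
      rw [show ((-m) * (-1) + (1 : ℝ) * 0 : ℝ) = m by ring] at h
      rw [hcneg, hF0] at h
      rw [h]; ring
    · rw [hm, hF0]; ring
    · have h := step1 (m / 2) (m / 2) (by linarith) (by linarith) 1 1
      rw [show ((m / 2) * 1 + (m / 2) * 1 : ℝ) = m by ring] at h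
      rw [← hc] at h
      rw [h]; ring
  have hcnonneg : 0 ≤ c := by
    have h := hmono _ _ (isCvxTilde_const 0) (isCvxTilde_const 1)
      (fun x => by exact_mod_cast (zero_le_one : (0:ℝ) ≤ 1))
    rw [hF0, ← hc] at h
    exact h
  have hind0 : ∀ r : ℝ, 0 < r → F (Ind n r) = 0 := by
    intro r hr
    have e : (fun x : EuclideanSpace ℝ (Fin n) =>
        ((1 : ℝ) : EReal) * Ind n r x + ((1 : ℝ) : EReal) * Ind n r x) = Ind n r := by
      funext x
      rw [EReal.coe_one, one_mul]
      by_cases hx : x ∈ closedBall (0 : EuclideanSpace ℝ (Fin n)) r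
      · rw [ind_of_mem hx]; simp
      · rw [ind_of_not_mem hx]; exact EReal.top_add_top
    have h := hlin _ _ 1 1 (isCvxTilde_ind hr) (isCvxTilde_ind hr) one_pos one_pos
      (by rw [e]; exact isCvxTilde_ind hr)
    rw [e] at h
    linarith
  have hsum : ∀ φ : EuclideanSpace ℝ (Fin n) → EReal, IsCvxTilde φ → ∀ r : ℝ, 0 < r →
      F (fun x => φ x + Ind n r x) = F φ := by
    intro φ hφ r hr
    have e : (fun x : EuclideanSpace ℝ (Fin n) =>
        ((1 : ℝ) : EReal) * φ x + ((1 : ℝ) : EReal) * Ind n r x)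
        = fun x => φ x + Ind n r x := by
      funext x; rw [EReal.coe_one, one_mul, one_mul]
    have h := hlin φ (Ind n r) 1 1 hφ (isCvxTilde_ind hr) one_pos one_pos
      (by rw [e]; exact isCvxTilde_add_ind hφ hr)
    rw [e] at h
    rw [h, hind0 r hr]; ring
  refine ⟨c, hcnonneg, ?_⟩
  intro φ hφ
  set m := (φ 0).toReal with hm
  have key : ∀ ε : ℝ, 0 < ε → F φ ≤ c * (m + ε) ∧ c * (m - ε) ≤ F φ := by
    intro ε hε
    obtain ⟨δ, hδ, hB⟩ := cvx_near_zero hφ hε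
    constructor
    · have h := hmono (fun x => φ x + Ind n δ x)
        (fun x => ((m + ε : ℝ) : EReal) + Ind n δ x)
        (isCvxTilde_add_ind hφ hδ) (isCvxTilde_add_ind (isCvxTilde_const (m + ε)) hδ) ?_
      · rw [hsum φ hφ δ hδ, hsum _ (isCvxTilde_const (m + ε)) δ hδ, hconstm (m + ε)] at h
        exact h
      · intro x
        show φ x + Ind n δ x ≤ ((m + ε : ℝ) : EReal) + Ind n δ x
        by_cases hx : x ∈ closedBall (0 : EuclideanSpace ℝ (Fin n)) δ
        · rw [ind_of_mem hx, add_zero, add_zero]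
          exact (hB x hx).1
        · rw [ind_of_not_mem hx, EReal.add_top_of_ne_bot (hφ.1.2.1 x),
            EReal.add_top_of_ne_bot (EReal.coe_ne_bot _)]
    · have h := hmono (fun x => ((m - ε : ℝ) : EReal) + Ind n δ x)
        (fun x => φ x + Ind n δ x)
        (isCvxTilde_add_ind (isCvxTilde_const (m - ε)) hδ) (isCvxTilde_add_ind hφ hδ) ?_
      · rw [hsum φ hφ δ hδ, hsum _ (isCvxTilde_const (m - ε)) δ hδ, hconstm (m - ε)] at h
        exact h
      · intro x
        show ((m - ε : ℝ) : EReal) + Ind n δ x ≤ φ x + Ind n δ x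
        by_cases hx : x ∈ closedBall (0 : EuclideanSpace ℝ (Fin n)) δ
        · rw [ind_of_mem hx, add_zero, add_zero]
          exact (hB x hx).2
        · rw [ind_of_not_mem hx, EReal.add_top_of_ne_bot (hφ.1.2.1 x),
            EReal.add_top_of_ne_bot (EReal.coe_ne_bot _)]
  have hle : F φ ≤ c * m := by
    by_contra hlt
    push_neg at hlt
    have hc1 : (0 : ℝ) < c + 1 := by linarith
    set ε := (F φ - c * m) / (c + 1) with hεdef
    have hε : 0 < ε := div_pos (by linarith) hc1
    have h := (key ε hε).1
    have h2 : (c + 1) * ε = F φ - c * m := by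
      rw [hεdef]; field_simp
    have h3 : c * (m + ε) = c * m + c * ε := by ring
    have h4 : (c + 1) * ε = c * ε + ε := by ring
    linarith
  have hge : c * m ≤ F φ := by
    by_contra hlt
    push_neg at hlt
    have hc1 : (0 : ℝ) < c + 1 := by linarith
    set ε := (c * m - F φ) / (c + 1) with hεdef
    have hε : 0 < ε := div_pos (by linarith) hc1
    have h := (key ε hε).2
    have h2 : (c + 1) * ε = c * m - F φ := by
      rw [hεdef]; field_simp
    have h3 : c * (m - ε) = c * m - c * ε := by ring
    have h4 : (c + 1) * ε = c * ε + ε := by ring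
    linarith
  linarith
end

section
/- Let f : ℝⁿ → ℝ be a C² function with compact support. Then there exists a > 0 such that the function x ↦ f(x) + ρ_a(x) is convex on ℝⁿ, where ρ_a(x) = a|x|²/2 for |x| ≤ a and ρ_a(x) = a²|x| - a³/2 for |x| ≥ a. -/
open Filter Topology

open scoped RealInnerProductSpace

set_option maxHeartbeats 1000000

/-- The convex function `ρ_a` of linear growth from the paper. -/
noncomputable def rho {n : ℕ} (a : ℝ) (x : EuclideanSpace ℝ (Fin n)) : ℝ :=
  if ‖x‖ ≤ a then a * ‖x‖ ^ 2 / 2 else a ^ 2 * ‖x‖ - a ^ 3 / 2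

section Aux

variable {n : ℕ}

local notation "E" => EuclideanSpace ℝ (Fin n)

/-- The derivative of `rho a` at `x`. -/
noncomputable def zeta (a : ℝ) (x : E) : E →L[ℝ] ℝ :=
  (if ‖x‖ ≤ a then a else a ^ 2 / ‖x‖) • innerSL ℝ x

lemma rho_eq {a : ℝ} (x : E) :
    rho a x = a / 2 * ‖x‖ ^ 2 - a / 2 * max (‖x‖ - a) 0 ^ 2 := by
  unfold rho
  split_ifs with h
  · rw [max_eq_right (by linarith)]; ring
  · rw [max_eq_left (by push_neg at h; linarith)]; ring

lemma hasFDerivAt_rho {a : ℝ} (ha : 0 < a) (x : E) :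
    HasFDerivAt (rho a) (zeta a x) x := by
  rcases lt_trichotomy ‖x‖ a with h | h | h
  · -- interior of the ball
    have h1 : HasFDerivAt (fun y : E => a / 2 * ‖y‖ ^ 2)
        ((a / 2) • (2 • (innerSL ℝ x).comp (ContinuousLinearMap.id ℝ E))) x :=
      ((hasFDerivAt_id x).norm_sq).const_mul (a / 2)
    have heq : rho a =ᶠ[nhds x] fun y : E => a / 2 * ‖y‖ ^ 2 := by
      filter_upwards [(isOpen_lt continuous_norm continuous_const).mem_nhds h] with y hy
      simp only [rho, if_pos hy.le]; ring
    have h2 := h1.congr_of_eventuallyEq heq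
    convert h2 using 1
    unfold zeta
    rw [if_pos h.le]
    ext v
    simp [ContinuousLinearMap.smul_apply, two_smul]
    ring
  · -- the sphere
    have hz : zeta a x = a • innerSL ℝ x := by unfold zeta; rw [if_pos h.le]
    rw [hz, hasFDerivAt_iff_isLittleO_nhds_zero, Asymptotics.isLittleO_iff]
    intro c hc
    have key : ∀ y : E, |rho a y - rho a x - (a • innerSL ℝ x) (y - x)| ≤ a * ‖y - x‖ ^ 2 := by
      intro y
      have hmx : max (‖x‖ - a) 0 = 0 := by rw [h]; simp
      set m := max (‖y‖ - a) 0 with hm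
      have hm0 : 0 ≤ m := le_max_right _ _
      have hm1 : m ≤ ‖y - x‖ := by
        rcases le_or_gt (‖y‖) a with hya | hya
        · rw [hm, max_eq_right (by linarith)]; exact norm_nonneg _
        · rw [hm, max_eq_left (by linarith)]
          have := norm_sub_norm_le y x
          linarith [this, h.ge]
      have happ : (a • innerSL ℝ x) (y - x) = a * (⟪x, y⟫ - ‖x‖ ^ 2) := by
        rw [ContinuousLinearMap.smul_apply, innerSL_apply_apply, inner_sub_right,
          real_inner_self_eq_norm_sq, smul_eq_mul]
      have hsq : ‖y - x‖ ^ 2 = ‖y‖ ^ 2 - 2 * ⟪x, y⟫ + ‖x‖ ^ 2 := by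
        rw [norm_sub_sq_real, real_inner_comm]
      have hid : rho a y - rho a x - (a • innerSL ℝ x) (y - x)
          = a / 2 * ‖y - x‖ ^ 2 - a / 2 * m ^ 2 := by
        rw [rho_eq y, rho_eq x, hmx, happ, ← hm, hsq]
        ring
      have hQ : m ^ 2 ≤ ‖y - x‖ ^ 2 := pow_le_pow_left₀ hm0 hm1 2
      rw [hid, abs_le]
      have hQ' : 0 ≤ a / 2 * m ^ 2 := by positivity
      have hQ'' : a / 2 * m ^ 2 ≤ a / 2 * ‖y - x‖ ^ 2 := by nlinarith
      have h0 : 0 ≤ a / 2 * ‖y - x‖ ^ 2 := by positivity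
      constructor <;> nlinarith
    rw [Metric.eventually_nhds_iff]
    refine ⟨c / a, by positivity, fun w hw => ?_⟩
    rw [dist_zero_right] at hw
    have hk := key (x + w)
    rw [add_sub_cancel_left] at hk
    calc ‖rho a (x + w) - rho a x - (a • innerSL ℝ x) w‖
        ≤ a * ‖w‖ ^ 2 := by rw [Real.norm_eq_abs]; exact hk
      _ ≤ c * ‖w‖ := by
          have hac : a * (c / a) = c := mul_div_cancel₀ _ ha.ne'
          nlinarith [norm_nonneg w, mul_lt_mul_of_pos_left hw ha]
  · -- outside the ball
    have hxpos : (0:ℝ) < ‖x‖ := ha.trans h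
    have hx2 : (0:ℝ) < ‖x‖ ^ 2 := by positivity
    have h1 : HasFDerivAt (fun y : E => ‖y‖ ^ 2)
        (2 • (innerSL ℝ x).comp (ContinuousLinearMap.id ℝ E)) x :=
      (hasFDerivAt_id x).norm_sq
    have h2 : HasDerivAt Real.sqrt (1 / (2 * Real.sqrt (‖x‖ ^ 2))) (‖x‖ ^ 2) :=
      Real.hasDerivAt_sqrt hx2.ne'
    have h3 := ((h2.comp_hasFDerivAt x h1).const_mul (a ^ 2)).sub_const (a ^ 3 / 2)
    have heq : rho a =ᶠ[nhds x]
        fun y : E => a ^ 2 * Real.sqrt (‖y‖ ^ 2) - a ^ 3 / 2 := by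
      filter_upwards [(isOpen_lt continuous_const continuous_norm).mem_nhds h] with y hy
      simp only [rho, if_neg (not_le.2 hy), Real.sqrt_sq (norm_nonneg y)]
    have h4 := h3.congr_of_eventuallyEq heq
    refine HasFDerivAt.congr_fderiv h4 ?_; symm
    unfold zeta
    rw [if_neg (not_le.2 h)]
    ext v
    rw [Real.sqrt_sq (norm_nonneg x)]
    have hx0 : ‖x‖ ≠ 0 := hxpos.ne'
    simp [ContinuousLinearMap.smul_apply, two_smul]
    field_simp
    ring

end Aux


private lemma key2_aux {a L nu nv : ℝ} (ha : 0 < a) (ha1 : 1 ≤ a) (haL : 8 * L ≤ a)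
    (hL0 : 0 ≤ L) (hnu0 : 0 ≤ nu) (hu : nu ≤ a / 2) (hv : a < nv) :
    L * (nu + nv) ≤ a * ((nv - nu) * (a - nu)) := by
  have hp1 : (0:ℝ) ≤ a * ((nv - a) * (a / 2 - nu)) :=
    mul_nonneg ha.le (mul_nonneg (by linarith) (by linarith))
  have hp2 : (0:ℝ) ≤ a * ((a / 2 - nu) * (3 * a / 2 - nu)) :=
    mul_nonneg ha.le (mul_nonneg (by linarith) (by linarith))
  have hp3 : (0:ℝ) ≤ (a / 8 - L) * (nv - a) := mul_nonneg (by linarith) (by linarith)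
  have hp4 : (0:ℝ) ≤ (a / 8 - L) * nu := mul_nonneg (by linarith) hnu0
  have hp5 : (0:ℝ) ≤ a * (a / 2 - nu) := mul_nonneg ha.le (by linarith)
  have hp6 : (0:ℝ) ≤ a ^ 2 * (a - 1) := mul_nonneg (sq_nonneg a) (by linarith)
  have hp7 : (0:ℝ) ≤ a * (a / 8 - L) := mul_nonneg ha.le (by linarith)
  have hp8 : (0:ℝ) ≤ (a ^ 2 / 2 - a / 4) * (nv - a) := by
    apply mul_nonneg _ (by linarith)
    nlinarith [ha1, ha.le]
  nlinarith [hp1, hp2, hp3, hp4, hp5, hp6, hp7, hp8]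

/-- Every `C²` compactly supported function becomes convex after adding `ρ_a`
for sufficiently large `a`. -/
theorem add_rho_convex {n : ℕ} (f : EuclideanSpace ℝ (Fin n) → ℝ)
    (hf : ContDiff ℝ 2 f) (hsupp : HasCompactSupport f) :
    ∃ a : ℝ, 0 < a ∧ ConvexOn ℝ Set.univ (fun x => f x + rho a x) := by
  classical
  -- bound on the gradient
  obtain ⟨L₀, hL₀⟩ := (hsupp.fderiv ℝ).exists_bound_of_continuous
    (hf.continuous_fderiv (by norm_num))
  obtain ⟨L, hL, hL0⟩ : ∃ L : ℝ, (∀ x, ‖fderiv ℝ f x‖ ≤ L) ∧ 0 ≤ L :=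
    ⟨max L₀ 0, fun x => (hL₀ x).trans (le_max_left _ _), le_max_right _ _⟩
  -- Lipschitz constant of the gradient
  obtain ⟨M, hM⟩ := ContDiff.lipschitzWith_of_hasCompactSupport (hsupp.fderiv ℝ)
    (hf.fderiv_right (m := 1) (by norm_num)) one_ne_zero
  have hM0 : (0:ℝ) ≤ (M : ℝ) := M.coe_nonneg
  -- radius of the support
  obtain ⟨r₁, hr₁⟩ := hsupp.isBounded.subset_closedBall (0 : EuclideanSpace ℝ (Fin n))
  obtain ⟨r₀, hr₀1, hr₀0⟩ : ∃ r₀ : ℝ, r₁ ≤ r₀ ∧ 0 ≤ r₀ :=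
    ⟨max r₁ 0, le_max_left _ _, le_max_right _ _⟩
  have hF0 : ∀ z : EuclideanSpace ℝ (Fin n), r₀ < ‖z‖ → fderiv ℝ f z = 0 := by
    intro z hz
    by_contra hne
    have hmem : z ∈ tsupport f := support_fderiv_subset ℝ (Function.mem_support.2 hne)
    have h2 := hr₁ hmem
    rw [Metric.mem_closedBall, dist_zero_right] at h2
    linarith
  obtain ⟨a, ha, ha1, haM, har, haL⟩ :
      ∃ a : ℝ, 0 < a ∧ 1 ≤ a ∧ (M : ℝ) ≤ a ∧ r₀ ≤ a / 2 ∧ 8 * L ≤ a :=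
    ⟨1 + (M : ℝ) + 2 * r₀ + 8 * L,
      by linarith [hM0, hr₀0, hL0], by linarith [hM0, hr₀0, hL0],
      by linarith [hr₀0, hL0], by linarith [hM0, hL0], by linarith [hM0, hr₀0]⟩
  -- the total derivative
  set G : EuclideanSpace ℝ (Fin n) → EuclideanSpace ℝ (Fin n) →L[ℝ] ℝ :=
    fun z => fderiv ℝ f z + zeta a z with hGdef
  have hG : ∀ z, HasFDerivAt (fun w => f w + rho a w) (G z) z := fun z =>
    ((hf.differentiable (by norm_num) z).hasFDerivAt).add (hasFDerivAt_rho ha z)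
  -- monotonicity of the derivative
  have hmain : ∀ u v : EuclideanSpace ℝ (Fin n), ‖u‖ ≤ ‖v‖ →
      0 ≤ (G u - G v) (u - v) := by
    intro u v huv
    have hexp : (G u - G v) (u - v) =
        ((fderiv ℝ f u - fderiv ℝ f v) (u - v)) + ((zeta a u - zeta a v) (u - v)) := by
      simp only [hGdef, ContinuousLinearMap.sub_apply, ContinuousLinearMap.add_apply]
      ring
    have hiu : ⟪u, u - v⟫ = ‖u‖ ^ 2 - ⟪u, v⟫ := by
      rw [inner_sub_right, real_inner_self_eq_norm_sq]
    have hiv : ⟪v, u - v⟫ = ⟪u, v⟫ - ‖v‖ ^ 2 := by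
      rw [inner_sub_right, real_inner_self_eq_norm_sq, real_inner_comm v u]
    have hzeta : (zeta a u - zeta a v) (u - v) =
        (if ‖u‖ ≤ a then a else a ^ 2 / ‖u‖) * (‖u‖ ^ 2 - ⟪u, v⟫)
          - (if ‖v‖ ≤ a then a else a ^ 2 / ‖v‖) * (⟪u, v⟫ - ‖v‖ ^ 2) := by
      simp only [zeta, ContinuousLinearMap.sub_apply, ContinuousLinearMap.smul_apply,
        innerSL_apply_apply, smul_eq_mul, hiu, hiv]
    have ht1 : ⟪u, v⟫ ≤ ‖u‖ * ‖v‖ := real_inner_le_norm u v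
    have ht2 : -(‖u‖ * ‖v‖) ≤ ⟪u, v⟫ := (abs_le.1 (abs_real_inner_le_norm u v)).1
    have hnu0 : (0:ℝ) ≤ ‖u‖ := norm_nonneg u
    have hnv0 : (0:ℝ) ≤ ‖v‖ := norm_nonneg v
    have hnuv : ‖u - v‖ ≤ ‖u‖ + ‖v‖ := norm_sub_le u v
    have hfp : |(fderiv ℝ f u - fderiv ℝ f v) (u - v)| ≤
        ‖fderiv ℝ f u - fderiv ℝ f v‖ * ‖u - v‖ := by
      rw [← Real.norm_eq_abs]
      exact ContinuousLinearMap.le_opNorm _ _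
    rcases le_or_gt ‖v‖ a with hv | hv
    · -- both in the ball
      have hu : ‖u‖ ≤ a := huv.trans hv
      have hlip : ‖fderiv ℝ f u - fderiv ℝ f v‖ ≤ (M : ℝ) * ‖u - v‖ := by
        have := hM.dist_le_mul u v
        rwa [dist_eq_norm, dist_eq_norm] at this
      have hsq : ‖u - v‖ ^ 2 = ‖u‖ ^ 2 - 2 * ⟪u, v⟫ + ‖v‖ ^ 2 := norm_sub_sq_real u v
      have hsq' : a * ‖u - v‖ ^ 2 = a * ‖u‖ ^ 2 - 2 * (a * ⟪u, v⟫) + a * ‖v‖ ^ 2 := by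
        rw [hsq]; ring
      rw [hexp, hzeta, if_pos hu, if_pos hv]
      have h1 := (abs_le.1 hfp).1
      have h2 := mul_le_mul_of_nonneg_right hlip (norm_nonneg (u - v))
      have h2' : ‖fderiv ℝ f u - fderiv ℝ f v‖ * ‖u - v‖ ≤ (M : ℝ) * ‖u - v‖ ^ 2 := by
        calc ‖fderiv ℝ f u - fderiv ℝ f v‖ * ‖u - v‖ ≤ (M : ℝ) * ‖u - v‖ * ‖u - v‖ := h2
          _ = (M : ℝ) * ‖u - v‖ ^ 2 := by ring
      have hp0 : (0:ℝ) ≤ (a - (M:ℝ)) * ‖u - v‖ ^ 2 :=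
        mul_nonneg (sub_nonneg.2 haM) (sq_nonneg _)
      have hp0' : (M : ℝ) * ‖u - v‖ ^ 2 ≤ a * ‖u - v‖ ^ 2 := by nlinarith [hp0]
      linarith [h1, h2', hsq', hp0']
    · -- ‖v‖ > a
      have hanv : (0:ℝ) < ‖v‖ := lt_trans ha hv
      have hFv : fderiv ℝ f v = 0 := hF0 v (by linarith)
      have hwv : a ^ 2 / ‖v‖ * ‖v‖ = a ^ 2 := div_mul_cancel₀ _ hanv.ne'
      have hwv0 : (0:ℝ) < a ^ 2 / ‖v‖ := by positivity
      rcases le_or_gt ‖u‖ (a / 2) with hu | hu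
      · -- u in the support region
        have hfu : -(L * ‖u - v‖) ≤ (fderiv ℝ f u - fderiv ℝ f v) (u - v) := by
          have h1 := (abs_le.1 hfp).1
          have h2 : ‖fderiv ℝ f u - fderiv ℝ f v‖ ≤ L := by
            rw [hFv, sub_zero]; exact hL u
          nlinarith [norm_nonneg (u - v)]
        rw [hexp, hzeta, if_pos (by linarith), if_neg (not_le.2 hv)]
        have hw1 : a ^ 2 / ‖v‖ * ⟪u, v⟫ ≤ a ^ 2 * ‖u‖ := by
          have := mul_le_mul_of_nonneg_left ht1 hwv0.le
          calc a ^ 2 / ‖v‖ * ⟪u, v⟫ ≤ a ^ 2 / ‖v‖ * (‖u‖ * ‖v‖) := this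
            _ = a ^ 2 * ‖u‖ := by field_simp
        have hwv2 : a ^ 2 / ‖v‖ * ‖v‖ ^ 2 = a ^ 2 * ‖v‖ := by
          field_simp
        have e1 : a * ⟪u, v⟫ ≤ a * (‖u‖ * ‖v‖) := mul_le_mul_of_nonneg_left ht1 ha.le
        have e4 : L * ‖u - v‖ ≤ L * (‖u‖ + ‖v‖) := mul_le_mul_of_nonneg_left hnuv hL0
        have key2 : L * (‖u‖ + ‖v‖) ≤ a * ((‖v‖ - ‖u‖) * (a - ‖u‖)) :=
          key2_aux ha ha1 haL hL0 hnu0 hu hv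
        linarith [e1, e4, hw1, hwv2, key2, hfu]
      · -- both outside the support
        have hFu : fderiv ℝ f u = 0 := hF0 u (by linarith)
        rw [hexp, hzeta, hFu, hFv, sub_zero]
        simp only [ContinuousLinearMap.zero_apply, zero_add]
        rcases le_or_gt ‖u‖ a with hua | hua
        · rw [if_pos hua, if_neg (not_le.2 hv)]
          have hw1 : a ^ 2 / ‖v‖ * ⟪u, v⟫ ≤ a ^ 2 * ‖u‖ := by
            have := mul_le_mul_of_nonneg_left ht1 hwv0.le
            calc a ^ 2 / ‖v‖ * ⟪u, v⟫ ≤ a ^ 2 / ‖v‖ * (‖u‖ * ‖v‖) := this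
              _ = a ^ 2 * ‖u‖ := by field_simp
          have hwv2 : a ^ 2 / ‖v‖ * ‖v‖ ^ 2 = a ^ 2 * ‖v‖ := by
            field_simp
          have e1 : a * ⟪u, v⟫ ≤ a * (‖u‖ * ‖v‖) := mul_le_mul_of_nonneg_left ht1 ha.le
          have hp : (0:ℝ) ≤ a * ((‖v‖ - ‖u‖) * (a - ‖u‖)) :=
            mul_nonneg ha.le (mul_nonneg (by linarith) (by linarith))
          linarith [e1, hw1, hwv2, hp]
        · rw [if_neg (not_le.2 hua), if_neg (not_le.2 hv)]
          have hanu : (0:ℝ) < ‖u‖ := lt_trans ha hua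
          have hwu : a ^ 2 / ‖u‖ * ‖u‖ = a ^ 2 := div_mul_cancel₀ _ hanu.ne'
          have hwu0 : (0:ℝ) < a ^ 2 / ‖u‖ := by positivity
          have hw1 : a ^ 2 / ‖v‖ * ⟪u, v⟫ ≤ a ^ 2 * ‖u‖ := by
            have := mul_le_mul_of_nonneg_left ht1 hwv0.le
            calc a ^ 2 / ‖v‖ * ⟪u, v⟫ ≤ a ^ 2 / ‖v‖ * (‖u‖ * ‖v‖) := this
              _ = a ^ 2 * ‖u‖ := by field_simp
          have hw2 : a ^ 2 / ‖u‖ * ⟪u, v⟫ ≤ a ^ 2 * ‖v‖ := by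
            have := mul_le_mul_of_nonneg_left ht1 hwu0.le
            calc a ^ 2 / ‖u‖ * ⟪u, v⟫ ≤ a ^ 2 / ‖u‖ * (‖u‖ * ‖v‖) := this
              _ = a ^ 2 * ‖v‖ := by field_simp
          have hq1 : a ^ 2 / ‖u‖ * ‖u‖ ^ 2 = a ^ 2 * ‖u‖ := by field_simp
          have hq2 : a ^ 2 / ‖v‖ * ‖v‖ ^ 2 = a ^ 2 * ‖v‖ := by field_simp
          linarith [hw1, hw2, hq1, hq2]
  have hmono : ∀ u v : EuclideanSpace ℝ (Fin n), 0 ≤ (G u - G v) (u - v) := by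
    intro u v
    rcases le_total ‖u‖ ‖v‖ with h | h
    · exact hmain u v h
    · have h0 := hmain v u h
      have e1 : u - v = -(v - u) := by abel
      have : (G u - G v) (u - v) = (G v - G u) (v - u) := by
        rw [e1, map_neg]
        simp only [ContinuousLinearMap.sub_apply]
        ring
      rw [this]
      exact h0
  -- conclude convexity by restricting to lines
  refine ⟨a, ha, convex_univ, ?_⟩
  intro p _ q _ s t hs ht hst
  set d : EuclideanSpace ℝ (Fin n) := q - p with hd
  set c : ℝ → EuclideanSpace ℝ (Fin n) := fun τ => p + τ • d with hc
  set h : ℝ → ℝ := fun τ => f (c τ) + rho a (c τ) with hh0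
  have hcd : ∀ τ, HasDerivAt c d τ := by
    intro τ
    have := ((hasDerivAt_id τ).smul_const d).const_add p
    simpa [hc] using this
  have hh : ∀ τ, HasDerivAt h ((G (c τ)) d) τ := fun τ =>
    (hG (c τ)).comp_hasDerivAt τ (hcd τ)
  have hdiff : Differentiable ℝ h := fun τ => (hh τ).differentiableAt
  have hmono' : Monotone (deriv h) := by
    intro σ τ hστ
    rw [(hh σ).deriv, (hh τ).deriv]
    rcases eq_or_lt_of_le hστ with rfl | hlt
    · exact le_rfl
    · have h0 := hmono (c τ) (c σ)
      have hdc : c τ - c σ = (τ - σ) • d := by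
        simp only [hc]
        rw [add_sub_add_left_eq_sub, ← sub_smul]
      rw [hdc, map_smul, smul_eq_mul] at h0
      have hX : 0 ≤ (G (c τ) - G (c σ)) d := by
        by_contra hX
        push_neg at hX
        have := mul_neg_of_pos_of_neg (sub_pos.2 hlt) hX
        linarith
      rw [ContinuousLinearMap.sub_apply] at hX
      linarith
  have hconv : ConvexOn ℝ Set.univ h :=
    Monotone.convexOn_univ_of_deriv hdiff hmono'
  have hkey := hconv.2 (Set.mem_univ (0:ℝ)) (Set.mem_univ (1:ℝ)) hs ht hst
  have e0 : c 0 = p := by simp [hc]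
  have e1 : c 1 = q := by simp [hc, hd]
  have et : c (s • (0:ℝ) + t • 1) = s • p + t • q := by
    have hs1 : s = 1 - t := by linarith
    simp only [hc, hd, smul_eq_mul, mul_zero, mul_one, zero_add, hs1]
    module
  simp only [hh0, e0, e1, et] at hkey
  simpa using hkey
end
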